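/- Exponential growth of extremal Euler characteristic: there exists a constant c > 0 and an integer N such that for every n ≥ N there exists a simple graph G on n vertices with χ(G) > e^{c·n}, and there exists a simple graph H on n vertices with χ(H) < −e^{c·n}. -/

import Mathlib

open Classical Finset

/-- The Euler characteristic of a finite simple graph:
`χ(G) = Σ_{k≥1} (−1)^{k+1} v_k(G)`, where `v_k` counts cliques with `k` vertices. -/
noncomputable def eulerChar {V : Type*} [Fintype V] (G : SimpleGraph V) : ℤ :=
  ∑ s ∈ Finset.univ.powerset.filter
      (fun s : Finset V => s.Nonempty ∧ G.IsClique (s : Set V)),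
    (-1 : ℤ) ^ (s.card + 1)

theorem sum_inj_pow {V I : Type*} [Fintype V] [DecidableEq V] [DecidableEq I]
    (f : V → I) (T : Finset I) :
    ∑ s ∈ (univ.filter (fun v => f v ∈ T)).powerset.filter
        (fun s : Finset V => Set.InjOn f s), (-1 : ℤ) ^ s.card
      = ∏ i ∈ T, (1 - ((univ.filter (fun v => f v = i)).card : ℤ)) := by
  induction T using Finset.induction_on with
  | empty => simp [Finset.filter_singleton, Set.injOn_empty]
  | @insert a T ha ih =>
    set F : Finset V := univ.filter (fun v => f v = a) with hF
    set B : Finset (Finset V) := F.powerset.filter (fun s => s.card ≤ 1) with hB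
    set AT : Finset (Finset V) := (univ.filter (fun v => f v ∈ T)).powerset.filter
        (fun s : Finset V => Set.InjOn f s) with hAT
    have key : ∑ s ∈ (univ.filter (fun v => f v ∈ insert a T)).powerset.filter
        (fun s : Finset V => Set.InjOn f s), (-1 : ℤ) ^ s.card
        = ∑ p ∈ AT ×ˢ B, (-1:ℤ)^p.1.card * (-1:ℤ)^p.2.card := by
      refine Finset.sum_nbij'
        (i := fun s => (s.filter (fun v => f v ∈ T), s.filter (fun v => f v = a)))
        (j := fun p => p.1 ∪ p.2) ?_ ?_ ?_ ?_ ?_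
      · intro s hs
        obtain ⟨hsub, hinj⟩ := mem_filter.1 hs
        rw [mem_powerset] at hsub
        rw [Finset.mem_product]
        refine ⟨mem_filter.2 ⟨mem_powerset.2 ?_, ?_⟩, mem_filter.2 ⟨mem_powerset.2 ?_, ?_⟩⟩
        · intro v hv
          obtain ⟨hv1, hv2⟩ := mem_filter.1 hv
          exact mem_filter.2 ⟨mem_univ v, hv2⟩
        · exact hinj.mono (Finset.coe_subset.2 (Finset.filter_subset _ s))
        · intro v hv
          obtain ⟨hv1, hv2⟩ := mem_filter.1 hv
          exact mem_filter.2 ⟨mem_univ v, hv2⟩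
        · refine Finset.card_le_one.2 ?_
          intro v hv w hw
          obtain ⟨hv1, hv2⟩ := mem_filter.1 hv
          obtain ⟨hw1, hw2⟩ := mem_filter.1 hw
          exact hinj (by exact_mod_cast hv1) (by exact_mod_cast hw1) (hv2.trans hw2.symm)
      · intro p hp
        rw [Finset.mem_product] at hp
        obtain ⟨hp1, hp2⟩ := hp
        obtain ⟨h1sub, h1inj⟩ := mem_filter.1 hp1
        obtain ⟨h2sub, h2card⟩ := mem_filter.1 hp2
        rw [mem_powerset] at h1sub h2sub
        refine mem_filter.2 ⟨mem_powerset.2 ?_, ?_⟩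
        · intro v hv
          rcases mem_union.1 hv with h | h
          · have := (mem_filter.1 (h1sub h)).2
            exact mem_filter.2 ⟨mem_univ v, mem_insert.2 (Or.inr this)⟩
          · have := (mem_filter.1 (h2sub h)).2
            exact mem_filter.2 ⟨mem_univ v, mem_insert.2 (Or.inl this)⟩
        · intro x hx y hy hxy
          rw [Finset.coe_union] at hx hy
          have fx2 : ∀ z ∈ p.2, f z = a := fun z hz => (mem_filter.1 (h2sub hz)).2
          have fx1 : ∀ z ∈ p.1, f z ∈ T := fun z hz => (mem_filter.1 (h1sub hz)).2
          rcases hx with hx | hx <;> rcases hy with hy | hy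
          · exact h1inj hx hy hxy
          · exact absurd ((fx2 y hy ▸ hxy : f x = a) ▸ fx1 x hx) ha
          · exact absurd ((fx2 x hx ▸ hxy.symm : f y = a) ▸ fx1 y hy) ha
          · exact Finset.card_le_one.1 h2card x hx y hy
      · intro s hs
        obtain ⟨hsub, hinj⟩ := mem_filter.1 hs
        rw [mem_powerset] at hsub
        ext v
        simp only [mem_union, mem_filter]
        constructor
        · rintro (⟨h, _⟩ | ⟨h, _⟩) <;> exact h
        · intro hv
          have := (mem_filter.1 (hsub hv)).2
          rcases mem_insert.1 this with h | h
          · exact Or.inr ⟨hv, h⟩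
          · exact Or.inl ⟨hv, h⟩
      · intro p hp
        rw [Finset.mem_product] at hp
        obtain ⟨hp1, hp2⟩ := hp
        obtain ⟨h1sub, h1inj⟩ := mem_filter.1 hp1
        obtain ⟨h2sub, h2card⟩ := mem_filter.1 hp2
        rw [mem_powerset] at h1sub h2sub
        have fx2 : ∀ z ∈ p.2, f z = a := fun z hz => (mem_filter.1 (h2sub hz)).2
        have fx1 : ∀ z ∈ p.1, f z ∈ T := fun z hz => (mem_filter.1 (h1sub hz)).2
        have e1 : (p.1 ∪ p.2).filter (fun v => f v ∈ T) = p.1 := by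
          ext v
          simp only [mem_filter, mem_union]
          constructor
          · rintro ⟨h | h, hT⟩
            · exact h
            · exact absurd (fx2 v h ▸ hT) ha
          · intro h
            exact ⟨Or.inl h, fx1 v h⟩
        have e2 : (p.1 ∪ p.2).filter (fun v => f v = a) = p.2 := by
          ext v
          simp only [mem_filter, mem_union]
          constructor
          · rintro ⟨h | h, hT⟩
            · exact absurd (hT ▸ fx1 v h) ha
            · exact h
          · intro h
            exact ⟨Or.inr h, fx2 v h⟩
        exact Prod.ext e1 e2
      · intro s hs
        obtain ⟨hsub, hinj⟩ := mem_filter.1 hs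
        rw [mem_powerset] at hsub
        have hdisj : Disjoint (s.filter (fun v => f v ∈ T)) (s.filter (fun v => f v = a)) := by
          rw [Finset.disjoint_left]
          intro v h1 h2
          exact ha ((mem_filter.1 h2).2 ▸ (mem_filter.1 h1).2)
        have hun : s.filter (fun v => f v ∈ T) ∪ s.filter (fun v => f v = a) = s := by
          ext v
          simp only [mem_union, mem_filter]
          constructor
          · rintro (⟨h, _⟩ | ⟨h, _⟩) <;> exact h
          · intro hv
            have := (mem_filter.1 (hsub hv)).2
            rcases mem_insert.1 this with h | h
            · exact Or.inr ⟨hv, h⟩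
            · exact Or.inl ⟨hv, h⟩
        have : s.card = (s.filter (fun v => f v ∈ T)).card + (s.filter (fun v => f v = a)).card := by
          rw [← Finset.card_union_of_disjoint hdisj, hun]
        rw [this, pow_add]
    rw [key, Finset.sum_product]
    simp_rw [← Finset.mul_sum]
    rw [← Finset.sum_mul]
    have hBsum : ∑ s ∈ B, (-1:ℤ)^s.card = 1 - (F.card : ℤ) := by
      have hBeq : B = insert ∅ (F.image fun v => ({v} : Finset V)) := by
        ext s
        simp only [hB, mem_filter, mem_powerset, mem_insert, mem_image]
        constructor
        · rintro ⟨hsub, hcard⟩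
          rcases s.eq_empty_or_nonempty with rfl | hne
          · exact Or.inl rfl
          · right
            have : s.card = 1 := le_antisymm hcard (Finset.one_le_card.2 hne)
            obtain ⟨v, rfl⟩ := Finset.card_eq_one.1 this
            exact ⟨v, hsub (mem_singleton_self v), rfl⟩
        · rintro (rfl | ⟨v, hv, rfl⟩)
          · simp
          · exact ⟨Finset.singleton_subset_iff.2 hv, by simp⟩
      rw [hBeq, Finset.sum_insert, Finset.sum_image]
      · simp [sub_eq_add_neg]
      · intro x _ y _ h
        exact Finset.singleton_injective h
      · intro hmem
        obtain ⟨v, _, h⟩ := mem_image.1 hmem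
        exact Finset.singleton_ne_empty v h
    rw [ih, hBsum, Finset.prod_insert ha]
    ring

/-- Complete multipartite graph determined by a coloring `f`. -/
def mpGraph {V I : Type*} (f : V → I) : SimpleGraph V where
  Adj v w := f v ≠ f w
  symm := ⟨fun v w h => Ne.symm h⟩
  loopless := ⟨fun v h => h rfl⟩

lemma mpGraph_clique_iff {V I : Type*} (f : V → I) (s : Finset V) :
    (mpGraph f).IsClique (s : Set V) ↔ Set.InjOn f s := by
  rw [SimpleGraph.isClique_iff]
  constructor
  · intro h x hx y hy hfxy
    by_contra hne
    exact (h hx hy hne) hfxy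
  · intro h x hx y hy hne
    exact fun hf => hne (h hx hy hf)

lemma eulerChar_mpGraph {V I : Type*} [Fintype V] [DecidableEq V] [Fintype I] [DecidableEq I]
    (f : V → I) :
    eulerChar (mpGraph f)
      = 1 - ∏ i : I, (1 - ((univ.filter (fun v => f v = i)).card : ℤ)) := by
  have huniv : (univ.filter (fun v : V => f v ∈ (univ : Finset I))) = (univ : Finset V) := by
    simp
  have h2 := sum_inj_pow f (univ : Finset I)
  rw [huniv, Finset.sum_filter] at h2
  unfold eulerChar
  rw [Finset.sum_filter]
  simp only [mpGraph_clique_iff]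
  rw [← h2, eq_sub_iff_add_eq, ← Finset.sum_add_distrib]
  rw [Finset.sum_eq_single_of_mem ∅ (by simp)]
  · simp [Set.injOn_empty]
  · intro s _ hne
    have hn : s.Nonempty := Finset.nonempty_iff_ne_empty.2 hne
    by_cases hinj : Set.InjOn f (s : Set V)
    · rw [if_pos ⟨hn, hinj⟩, if_pos hinj, pow_succ]
      ring
    · rw [if_neg (fun h => hinj h.2), if_neg hinj, add_zero]

/-- The block coloring: vertex `v` goes to block `min (v/3) (r-1)`. -/
def blk (n r : ℕ) (hr : 0 < r) : Fin n → Fin r :=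
  fun v => ⟨min (v.val / 3) (r-1), by omega⟩

lemma blk_fiber_small (n r : ℕ) (hr : 0 < r) (hn : 3*r ≤ n) (i : Fin r) (hi : i.val < r - 1) :
    ((univ.filter (fun v : Fin n => blk n r hr v = i)).card : ℤ) = 3 := by
  have h1 : (univ.filter (fun v : Fin n => blk n r hr v = i))
      = {⟨3*i.val, by omega⟩, ⟨3*i.val+1, by omega⟩, ⟨3*i.val+2, by omega⟩} := by
    ext v
    simp only [mem_filter, mem_univ, true_and, mem_insert, mem_singleton, blk, Fin.ext_iff]
    omega
  rw [h1]
  rw [Finset.card_insert_of_notMem (by simp only [mem_insert, mem_singleton, Fin.ext_iff]; omega),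
      Finset.card_insert_of_notMem (by simp only [mem_singleton, Fin.ext_iff]; omega),
      Finset.card_singleton]
  norm_num

lemma blk_fiber_last (n r : ℕ) (hr : 0 < r) (hn : 3*r ≤ n) :
    ((univ.filter (fun v : Fin n => blk n r hr v = ⟨r-1, by omega⟩)).card : ℤ)
      = (n : ℤ) - 3*((r:ℤ)-1) := by
  have h1 : (univ.filter (fun v : Fin n => blk n r hr v = ⟨r-1, by omega⟩))
      = univ.filter (fun v : Fin n => 3*(r-1) ≤ v.val) := by
    ext v
    simp only [mem_filter, mem_univ, true_and, blk, Fin.ext_iff]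
    omega
  have h2 : (univ.filter (fun v : Fin n => 3*(r-1) ≤ v.val)).image Fin.val
      = Finset.Ico (3*(r-1)) n := by
    ext a
    simp only [Finset.mem_image, mem_filter, mem_univ, true_and, Finset.mem_Ico]
    constructor
    · rintro ⟨v, hv, rfl⟩
      exact ⟨hv, v.isLt⟩
    · rintro ⟨h1, h2⟩
      exact ⟨⟨a, h2⟩, h1, rfl⟩
  have h3 : (univ.filter (fun v : Fin n => 3*(r-1) ≤ v.val)).card = n - 3*(r-1) := by
    rw [← Finset.card_image_of_injective _ Fin.val_injective, h2, Nat.card_Ico]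
  rw [h1, h3]
  push_cast
  omega

lemma prod_blk (n r : ℕ) (hr : 0 < r) (hn : 3*r ≤ n) :
    ∏ i : Fin r, (1 - ((univ.filter (fun v : Fin n => blk n r hr v = i)).card : ℤ))
      = (-2)^(r-1) * (1 - ((n:ℤ) - 3*((r:ℤ)-1))) := by
  obtain ⟨k, rfl⟩ : ∃ k, r = k + 1 := ⟨r - 1, by omega⟩
  rw [Fin.prod_univ_castSucc]
  have hlast : (Fin.last k) = (⟨(k+1)-1, by omega⟩ : Fin (k+1)) := by
    simp [Fin.ext_iff]
  have h1 : ∀ i : Fin k,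
      (1 - ((univ.filter (fun v : Fin n => blk n (k+1) hr v = i.castSucc)).card : ℤ)) = -2 := by
    intro i
    rw [blk_fiber_small n (k+1) hr hn i.castSucc (by simp)]
    ring
  rw [Finset.prod_congr rfl (fun i _ => h1 i), Finset.prod_const, hlast,
      blk_fiber_last n (k+1) hr hn]
  simp

lemma exists_mp_graph (n r : ℕ) (hr : 0 < r) (hn : 3*r ≤ n) :
    ∃ G : SimpleGraph (Fin n),
      eulerChar G = 1 - (-2)^(r-1) * (1 - ((n:ℤ) - 3*((r:ℤ)-1))) := by
  refine ⟨mpGraph (blk n r hr), ?_⟩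
  rw [eulerChar_mpGraph, prod_blk n r hr hn]

lemma exists_bounds (n q : ℕ) (hq : 6 ≤ q) (h1 : 3*q ≤ n) (h2 : n ≤ 3*q+2) :
    (∃ G : SimpleGraph (Fin n), (2:ℤ)^q + 1 ≤ eulerChar G) ∧
    (∃ H : SimpleGraph (Fin n), eulerChar H ≤ 1 - (2:ℤ)^q) := by
  obtain ⟨k, rfl⟩ : ∃ k, q = k + 2 := ⟨q - 2, by omega⟩
  obtain ⟨G1, hG1⟩ := exists_mp_graph n (k+2) (by omega) (by omega)
  obtain ⟨G2, hG2⟩ := exists_mp_graph n (k+1) (by omega) (by omega)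
  have ek1 : (k+2) - 1 = k + 1 := by omega
  have ek2 : (k+1) - 1 = k := by omega
  rw [ek1] at hG1
  rw [ek2] at hG2
  push_cast at hG1 hG2
  have hd0 : (3*((k:ℤ)+2)) ≤ (n:ℤ) := by exact_mod_cast h1
  have hd2 : (n:ℤ) ≤ 3*((k:ℤ)+2)+2 := by exact_mod_cast h2
  have hp : (0:ℤ) < 2^k := by positivity
  have hpow2 : ((2:ℤ))^(k+2) = 4 * 2^k := by ring
  have hpow1 : ((2:ℤ))^(k+1) = 2 * 2^k := by ring
  rcases Nat.even_or_odd k with he | ho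
  · -- k even : (-2)^k = 2^k, (-2)^(k+1) = -(2^(k+1))
    have q1 : ((-2):ℤ)^(k+1) = -(2^(k+1)) := (he.add_one).neg_pow 2
    have q2 : ((-2):ℤ)^k = 2^k := he.neg_pow 2
    rw [q1] at hG1
    rw [q2] at hG2
    constructor
    · exact ⟨G2, by rw [hG2]; nlinarith⟩
    · exact ⟨G1, by rw [hG1]; nlinarith⟩
  · have q1 : ((-2):ℤ)^(k+1) = 2^(k+1) := (ho.add_one).neg_pow 2
    have q2 : ((-2):ℤ)^k = -(2^k) := ho.neg_pow 2
    rw [q1] at hG1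
    rw [q2] at hG2
    constructor
    · exact ⟨G1, by rw [hG1]; nlinarith⟩
    · exact ⟨G2, by rw [hG2]; nlinarith⟩


/-- Exponential growth of the extremal Euler characteristic: there are `c > 0` and `N`
such that for every `n ≥ N` some graph on `n` vertices has `χ > e^{c·n}` and some graph
on `n` vertices has `χ < −e^{c·n}`. -/
theorem extremal_euler_char_exponential :
    ∃ c : ℝ, 0 < c ∧ ∃ N : ℕ, ∀ n : ℕ, N ≤ n →
      (∃ G : SimpleGraph (Fin n), (eulerChar G : ℝ) > Real.exp (c * n)) ∧
      (∃ H : SimpleGraph (Fin n), (eulerChar H : ℝ) < -Real.exp (c * n)) := by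
  refine ⟨Real.log 2 / 6, by positivity, 18, ?_⟩
  intro n hn
  set q := n / 3 with hqdef
  have h1 : 3*q ≤ n := by omega
  have h2 : n ≤ 3*q+2 := by omega
  have hq6 : 6 ≤ q := by omega
  obtain ⟨⟨G, hG⟩, ⟨H, hH⟩⟩ := exists_bounds n q hq6 h1 h2
  have e1 : Real.exp (Real.log 2 / 6 * n) = (2:ℝ) ^ ((n:ℝ)/6) := by
    rw [Real.rpow_def_of_pos (by norm_num : (0:ℝ) < 2)]
    congr 1
    ring
  have e2 : ((2:ℝ)^(q-1 : ℕ)) = (2:ℝ) ^ (((q-1:ℕ) : ℝ)) := by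
    rw [Real.rpow_natCast]
  have hcast : ((q-1:ℕ):ℝ) = (q:ℝ) - 1 := by
    rw [Nat.cast_sub (by omega : 1 ≤ q)]
    norm_num
  have hlt : ((n:ℝ)/6) < ((q-1:ℕ):ℝ) := by
    rw [hcast]
    have hn' : (n:ℝ) ≤ 3*(q:ℝ)+2 := by exact_mod_cast h2
    have hn18 : (18:ℝ) ≤ (n:ℝ) := by exact_mod_cast hn
    linarith
  have hkey : Real.exp (Real.log 2 / 6 * n) < (2:ℝ)^(q-1 : ℕ) := by
    rw [e1, e2]
    exact (Real.rpow_lt_rpow_left_iff (by norm_num : (1:ℝ) < 2)).2 hlt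
  have hle : (2:ℝ)^(q-1:ℕ) ≤ (2:ℝ)^q := by
    apply pow_le_pow_right₀ (by norm_num : (1:ℝ) ≤ 2) (by omega)
  have h2q : (2:ℝ)^q = 2^(q-1:ℕ) * 2 := by
    rw [← pow_succ]
    congr 1
    omega
  have hone : (1:ℝ) ≤ (2:ℝ)^(q-1:ℕ) := one_le_pow₀ (by norm_num)
  constructor
  · refine ⟨G, ?_⟩
    have hGr : ((2:ℝ)^q + 1) ≤ (eulerChar G : ℝ) := by exact_mod_cast hG
    linarith
  · refine ⟨H, ?_⟩
    have hHr : (eulerChar H : ℝ) ≤ 1 - (2:ℝ)^q := by exact_mod_cast hH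
    linarith
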